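/- Let p, d ∈ L^∞(ℝ) be non-negative, n₀ ∈ L¹(ℝ) non-negative, and T > 0. Then there exists a unique non-negative ρ ∈ L^∞(0,T) satisfying ρ(t) = ∫_ℝ n₀(x) exp(t p(x) − d(x) ∫₀ᵗ ρ(s) ds) dx for a.e. t ∈ (0,T). -/

import Mathlib

open MeasureTheory Set

/-- `e^{-u}` is 1-Lipschitz on nonneg reals. -/
lemma exp_neg_lip {u v : ℝ} (hu : 0 ≤ u) (hv : 0 ≤ v) :
    |Real.exp (-u) - Real.exp (-v)| ≤ |u - v| := by
  have key : ∀ a b : ℝ, 0 ≤ a → a ≤ b → Real.exp (-a) - Real.exp (-b) ≤ b - a := by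
    intro a b ha hab
    have h1 : Real.exp (-a) ≤ 1 := Real.exp_le_one_iff.mpr (by linarith)
    have h2 : (a - b) + 1 ≤ Real.exp (a - b) := Real.add_one_le_exp _
    have h3 : Real.exp (-a) * Real.exp (a - b) = Real.exp (-b) := by
      rw [← Real.exp_add]; ring_nf
    have h4 : 0 < Real.exp (-a) := Real.exp_pos _
    nlinarith
  rcases le_total u v with h | h
  · have h5 : Real.exp (-v) ≤ Real.exp (-u) := Real.exp_le_exp.mpr (by linarith)
    rw [abs_of_nonneg (by linarith), abs_of_nonpos (by linarith)]
    have := key u v hu h; linarith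
  · have h5 : Real.exp (-u) ≤ Real.exp (-v) := Real.exp_le_exp.mpr (by linarith)
    rw [abs_of_nonpos (by linarith), abs_of_nonneg (by linarith)]
    have := key v u hv h; linarith

noncomputable def gFun (p d n₀ : ℝ → ℝ) (t y : ℝ) : ℝ :=
  ∫ x, n₀ x * Real.exp (t * p x - d x * max y 0)

section gLemmas

variable {p d n₀ : ℝ → ℝ} {Np Nd : ℝ}
variable (hpm : Measurable p) (hdm : Measurable d)
  (hpnn : ∀ x, 0 ≤ p x) (hdnn : ∀ x, 0 ≤ d x) (hn₀nn : ∀ x, 0 ≤ n₀ x)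
  (hn₀L1 : Integrable n₀) (hNp : ∀ x, p x ≤ Np) (hNd : ∀ x, d x ≤ Nd)

include hpm hdm hpnn hdnn hn₀nn hn₀L1 hNp in
/-- Integrability of the integrand, with an exponent bound by `s` for all `t ≤ s`, `0 ≤ ...`. -/
lemma gInt (t y : ℝ) :
    Integrable (fun x => n₀ x * Real.exp (t * p x - d x * max y 0)) := by
  have hmeas : AEStronglyMeasurable (fun x => Real.exp (t * p x - d x * max y 0)) volume :=
    (Real.continuous_exp.measurable.comp
      ((hpm.const_mul t).sub (hdm.mul_const _))).aestronglyMeasurable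
  have H := hn₀L1.bdd_mul hmeas (c := Real.exp (|t| * Np)) (Filter.Eventually.of_forall fun x => ?_)
  · have : (fun x => Real.exp (t * p x - d x * max y 0) * n₀ x)
        = fun x => n₀ x * Real.exp (t * p x - d x * max y 0) := by funext x; ring
    rwa [this] at H
  · rw [Real.norm_eq_abs, abs_of_nonneg (Real.exp_pos _).le]
    apply Real.exp_le_exp.mpr
    have h1 : t * p x ≤ |t| * Np := by
      calc t * p x ≤ |t| * p x := mul_le_mul_of_nonneg_right (le_abs_self t) (hpnn x)
        _ ≤ |t| * Np := mul_le_mul_of_nonneg_left (hNp x) (abs_nonneg t)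
    have h2 : 0 ≤ d x * max y 0 := mul_nonneg (hdnn x) (le_max_right _ _)
    linarith

include hn₀nn in
lemma gNonneg (t y : ℝ) : 0 ≤ gFun p d n₀ t y :=
  integral_nonneg fun x => mul_nonneg (hn₀nn x) (Real.exp_pos _).le

include hpm hdm hpnn hdnn hn₀nn hn₀L1 hNp in
lemma gBound {t : ℝ} (y : ℝ) {s : ℝ} (ht : |t| ≤ s) :
    gFun p d n₀ t y ≤ (∫ x, n₀ x) * Real.exp (s * Np) := by
  have hNp0 : 0 ≤ Np := (hpnn 0).trans (hNp 0)
  have h := gInt hpm hdm hpnn hdnn hn₀nn hn₀L1 hNp t y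
  unfold gFun
  calc ∫ x, n₀ x * Real.exp (t * p x - d x * max y 0) ≤ ∫ x, n₀ x * Real.exp (s * Np) := by
        apply integral_mono h (hn₀L1.mul_const _)
        intro x
        apply mul_le_mul_of_nonneg_left _ (hn₀nn x)
        apply Real.exp_le_exp.mpr
        have h1 : t * p x ≤ |t| * Np := by
          calc t * p x ≤ |t| * p x := mul_le_mul_of_nonneg_right (le_abs_self t) (hpnn x)
            _ ≤ |t| * Np := mul_le_mul_of_nonneg_left (hNp x) (abs_nonneg t)
        have h2 : 0 ≤ d x * max y 0 := mul_nonneg (hdnn x) (le_max_right _ _)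
        have h3 : |t| * Np ≤ s * Np := mul_le_mul_of_nonneg_right ht hNp0
        linarith
    _ = (∫ x, n₀ x) * Real.exp (s * Np) := by rw [integral_mul_const]

end gLemmas

section gLemmas2

variable {p d n₀ : ℝ → ℝ} {Np Nd : ℝ}
variable (hpm : Measurable p) (hdm : Measurable d)
  (hpnn : ∀ x, 0 ≤ p x) (hdnn : ∀ x, 0 ≤ d x) (hn₀nn : ∀ x, 0 ≤ n₀ x)
  (hn₀L1 : Integrable n₀) (hNp : ∀ x, p x ≤ Np) (hNd : ∀ x, d x ≤ Nd)

include hpm hdm hpnn hdnn hn₀nn hn₀L1 hNp hNd in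
lemma gLip {t T : ℝ} (ht : t ∈ Icc 0 T) (y₁ y₂ : ℝ) :
    |gFun p d n₀ t y₁ - gFun p d n₀ t y₂|
      ≤ Nd * ((∫ x, n₀ x) * Real.exp (T * Np)) * |y₁ - y₂| := by
  have hNd0 : 0 ≤ Nd := (hdnn 0).trans (hNd 0)
  have h1 := gInt hpm hdm hpnn hdnn hn₀nn hn₀L1 hNp t y₁
  have h2 := gInt hpm hdm hpnn hdnn hn₀nn hn₀L1 hNp t y₂
  have key : ∀ x, |n₀ x * Real.exp (t * p x - d x * max y₁ 0)
        - n₀ x * Real.exp (t * p x - d x * max y₂ 0)|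
      ≤ n₀ x * (Real.exp (T * Np) * (Nd * |y₁ - y₂|)) := by
    intro x
    have factor : n₀ x * Real.exp (t * p x - d x * max y₁ 0)
          - n₀ x * Real.exp (t * p x - d x * max y₂ 0)
        = n₀ x * Real.exp (t * p x)
            * (Real.exp (-(d x * max y₁ 0)) - Real.exp (-(d x * max y₂ 0))) := by
      rw [mul_sub, mul_assoc, mul_assoc, ← Real.exp_add, ← Real.exp_add]; ring_nf
    rw [factor, abs_mul, abs_of_nonneg (mul_nonneg (hn₀nn x) (Real.exp_pos _).le)]
    have lip := exp_neg_lip (mul_nonneg (hdnn x) (le_max_right y₁ 0))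
      (mul_nonneg (hdnn x) (le_max_right y₂ 0))
    have hmax : |max y₁ 0 - max y₂ 0| ≤ |y₁ - y₂| := abs_max_sub_max_le_abs _ _ _
    have hd : |d x * max y₁ 0 - d x * max y₂ 0| ≤ Nd * |y₁ - y₂| := by
      rw [← mul_sub, abs_mul, abs_of_nonneg (hdnn x)]
      exact mul_le_mul (hNd x) hmax (abs_nonneg _) hNd0
    have hexp : Real.exp (t * p x) ≤ Real.exp (T * Np) := by
      apply Real.exp_le_exp.mpr
      calc t * p x ≤ t * Np := mul_le_mul_of_nonneg_left (hNp x) ht.1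
        _ ≤ T * Np := mul_le_mul_of_nonneg_right ht.2 ((hpnn 0).trans (hNp 0))
    calc n₀ x * Real.exp (t * p x)
          * |Real.exp (-(d x * max y₁ 0)) - Real.exp (-(d x * max y₂ 0))|
        ≤ n₀ x * Real.exp (T * Np) * (Nd * |y₁ - y₂|) := by
          apply mul_le_mul
          · exact mul_le_mul_of_nonneg_left hexp (hn₀nn x)
          · exact lip.trans hd
          · exact abs_nonneg _
          · exact mul_nonneg (hn₀nn x) (Real.exp_pos _).le
      _ = n₀ x * (Real.exp (T * Np) * (Nd * |y₁ - y₂|)) := by ring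
  have hsub : gFun p d n₀ t y₁ - gFun p d n₀ t y₂
      = ∫ x, (n₀ x * Real.exp (t * p x - d x * max y₁ 0)
          - n₀ x * Real.exp (t * p x - d x * max y₂ 0)) := (integral_sub h1 h2).symm
  rw [hsub]
  calc |∫ x, (n₀ x * Real.exp (t * p x - d x * max y₁ 0)
          - n₀ x * Real.exp (t * p x - d x * max y₂ 0))|
      ≤ ∫ x, |n₀ x * Real.exp (t * p x - d x * max y₁ 0)
          - n₀ x * Real.exp (t * p x - d x * max y₂ 0)| := by
        simpa [Real.norm_eq_abs] using
          norm_integral_le_integral_norm (μ := volume) (f := fun x =>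
            n₀ x * Real.exp (t * p x - d x * max y₁ 0)
              - n₀ x * Real.exp (t * p x - d x * max y₂ 0))
    _ ≤ ∫ x, n₀ x * (Real.exp (T * Np) * (Nd * |y₁ - y₂|)) := by
        exact integral_mono (h1.sub h2).abs (hn₀L1.mul_const _) key
    _ = Nd * ((∫ x, n₀ x) * Real.exp (T * Np)) * |y₁ - y₂| := by
        rw [integral_mul_const]; ring

include hpm hdm hpnn hdnn hn₀nn hn₀L1 hNp in
lemma gCont : Continuous fun q : ℝ × ℝ => gFun p d n₀ q.1 q.2 := by
  rw [continuous_iff_continuousAt]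
  intro q₀
  apply continuousAt_of_dominated (bound := fun x => n₀ x * Real.exp ((|q₀.1| + 1) * Np))
  · exact Filter.Eventually.of_forall fun q =>
      ((gInt hpm hdm hpnn hdnn hn₀nn hn₀L1 hNp q.1 q.2)).aestronglyMeasurable
  · have hnb : ∀ᶠ q : ℝ × ℝ in nhds q₀, |q.1| ≤ |q₀.1| + 1 :=
      (continuous_fst.abs.tendsto q₀).eventually (eventually_le_nhds (lt_add_one _))


    filter_upwards [hnb] with q hq
    apply Filter.Eventually.of_forall
    intro x
    rw [Real.norm_eq_abs, abs_of_nonneg (mul_nonneg (hn₀nn x) (Real.exp_pos _).le)]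
    apply mul_le_mul_of_nonneg_left _ (hn₀nn x)
    apply Real.exp_le_exp.mpr
    have h1 : q.1 * p x ≤ |q.1| * p x := mul_le_mul_of_nonneg_right (le_abs_self _) (hpnn x)
    have h2 : |q.1| * p x ≤ (|q₀.1| + 1) * p x := mul_le_mul_of_nonneg_right hq (hpnn x)
    have h3 : (|q₀.1| + 1) * p x ≤ (|q₀.1| + 1) * Np :=
      mul_le_mul_of_nonneg_left (hNp x) (by positivity)
    have h4 : 0 ≤ d x * max q.2 0 := mul_nonneg (hdnn x) (le_max_right _ _)
    linarith
  · exact hn₀L1.mul_const _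
  · apply Filter.Eventually.of_forall
    intro x
    have : Continuous fun q : ℝ × ℝ => n₀ x * Real.exp (q.1 * p x - d x * max q.2 0) := by
      continuity
    exact this.continuousAt

end gLemmas2

set_option maxHeartbeats 1000000 in
/-- Existence and uniqueness (a.e. on `(0,T)`) of a non-negative bounded solution of the
fixed-point equation for the total population size. -/
theorem stmt_2 (T : ℝ) (hT : 0 < T) (p d n₀ : ℝ → ℝ)
    (hpm : Measurable p) (hdm : Measurable d)
    (hpnn : ∀ x, 0 ≤ p x) (hdnn : ∀ x, 0 ≤ d x) (hn₀nn : ∀ x, 0 ≤ n₀ x)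
    (hn₀L1 : Integrable n₀) (Np Nd : ℝ) (hNp : ∀ x, p x ≤ Np) (hNd : ∀ x, d x ≤ Nd) :
    ∃ ρ : ℝ → ℝ, Measurable ρ ∧ (∀ t, 0 ≤ ρ t) ∧ (∃ C, ∀ t ∈ Ioo (0:ℝ) T, ρ t ≤ C) ∧
      (∀ᵐ t ∂(volume.restrict (Ioo (0:ℝ) T)),
        ρ t = ∫ x, n₀ x * Real.exp (t * p x - d x * ∫ s in (0:ℝ)..t, ρ s)) ∧
      (∀ ρ' : ℝ → ℝ, Measurable ρ' → (∀ t, 0 ≤ ρ' t) →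
        (∃ C, ∀ t ∈ Ioo (0:ℝ) T, ρ' t ≤ C) →
        (∀ᵐ t ∂(volume.restrict (Ioo (0:ℝ) T)),
          ρ' t = ∫ x, n₀ x * Real.exp (t * p x - d x * ∫ s in (0:ℝ)..t, ρ' s)) →
        (∀ᵐ t ∂(volume.restrict (Ioo (0:ℝ) T)), ρ' t = ρ t)) := by
  have hNp0 : 0 ≤ Np := (hpnn 0).trans (hNp 0)
  have hNd0 : 0 ≤ Nd := (hdnn 0).trans (hNd 0)
  set I : ℝ := ∫ x, n₀ x with hIdef
  have hI0 : 0 ≤ I := integral_nonneg hn₀nn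
  set CC : ℝ := I * Real.exp (T * Np) with hCCdef
  have hCC0 : 0 ≤ CC := mul_nonneg hI0 (Real.exp_pos _).le
  set Lc : NNReal := ⟨Nd * CC, mul_nonneg hNd0 hCC0⟩ with hLcdef
  have habsT : ∀ t ∈ Icc (0:ℝ) T, |t| ≤ T := fun t ht => abs_le.mpr ⟨by linarith [ht.1], ht.2⟩
  -- Lipschitz property of gFun in its second variable, uniformly on t ∈ Icc 0 T
  have hgLipW : ∀ t ∈ Icc (0:ℝ) T, LipschitzWith Lc (gFun p d n₀ t) := by
    intro t ht
    apply LipschitzWith.of_dist_le_mul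
    intro y₁ y₂
    rw [Real.dist_eq, Real.dist_eq]
    have h := gLip hpm hdm hpnn hdnn hn₀nn hn₀L1 hNp hNd ht y₁ y₂
    have hLcv : (Lc : ℝ) = Nd * CC := rfl
    rw [hLcv]
    exact h
  have hgcont := gCont hpm hdm hpnn hdnn hn₀nn hn₀L1 hNp
  -- Picard–Lindelöf
  have hPL : IsPicardLindelof (fun t y => gFun p d n₀ t y) (tmin := 0) (tmax := T)
      ⟨0, le_rfl, hT.le⟩ 0 ⟨CC * T, mul_nonneg hCC0 hT.le⟩ 0 ⟨CC, hCC0⟩ Lc := by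
    constructor
    · exact fun t ht => (hgLipW t ht).lipschitzOnWith
    · exact fun y _ => (hgcont.comp (continuous_id.prodMk continuous_const)).continuousOn
    · intro t ht y _
      rw [Real.norm_of_nonneg (gNonneg hn₀nn t y)]
      exact gBound hpm hdm hpnn hdnn hn₀nn hn₀L1 hNp y (habsT t ht)
    · show CC * max (T - 0) (0 - 0) ≤ CC * T - 0
      rw [sub_zero, zero_sub, neg_zero, max_eq_left hT.le, sub_zero]
  obtain ⟨F, hF0, hFd⟩ := hPL.exists_eq_forall_mem_Icc_hasDerivWithinAt₀
  have hFc : ContinuousOn F (Icc 0 T) := fun t ht => (hFd t ht).continuousWithinAt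
  -- clamp
  set cl : ℝ → ℝ := fun t => max 0 (min t T) with hcldef
  have hclcont : Continuous cl := continuous_const.max (continuous_id.min continuous_const)
  have hclmem : ∀ t, cl t ∈ Icc (0:ℝ) T := fun t =>
    ⟨le_max_left _ _, max_le (hT.le) (min_le_right _ _)⟩
  have hcleq : ∀ t ∈ Icc (0:ℝ) T, cl t = t := by
    intro t ht
    rw [hcldef]
    simp only [min_eq_left ht.2, max_eq_right ht.1]
  -- the continuous extension of F
  set Fc : ℝ → ℝ := fun t => F (cl t) with hFcdef
  have hFccont : Continuous Fc := hFc.comp_continuous hclcont hclmem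
  -- the candidate solution
  have hρcont0 := hgcont.comp (continuous_id.prodMk hFccont)
  have hρcont : Continuous (fun t => gFun p d n₀ t (Fc t)) := by
    exact hρcont0
  have hρeq : ∀ t ∈ Icc (0:ℝ) T, gFun p d n₀ t (Fc t) = gFun p d n₀ t (F t) := by
    intro t ht
    have : Fc t = F t := by rw [hFcdef]; simp only; rw [hcleq t ht]
    rw [this]
  -- ψ := s ↦ g s (F s) is continuous on Icc 0 T
  have hψcont : ContinuousOn (fun s => gFun p d n₀ s (F s)) (Icc 0 T) :=
    hρcont.continuousOn.congr fun s hs => (hρeq s hs).symm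
  -- FTC for F
  have hFTC : ∀ t ∈ Icc (0:ℝ) T, F t = ∫ s in (0:ℝ)..t, gFun p d n₀ s (F s) := by
    intro t ht
    have hsub : Icc (0:ℝ) t ⊆ Icc 0 T := Icc_subset_Icc le_rfl ht.2
    have heq := intervalIntegral.integral_eq_sub_of_hasDeriv_right_of_le ht.1
      (hFc.mono hsub)
      (fun s hs => by
        have hsT : s ∈ Icc (0:ℝ) T := ⟨hs.1.le, (hs.2.le.trans ht.2)⟩
        have : HasDerivAt F (gFun p d n₀ s (F s)) s :=
          (hFd s hsT).hasDerivAt (Icc_mem_nhds hs.1 (lt_of_lt_of_le hs.2 ht.2))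
        exact this.hasDerivWithinAt)
      (by
        apply ContinuousOn.intervalIntegrable
        rw [uIcc_of_le ht.1]
        exact hψcont.mono hsub)
    rw [heq, hF0, sub_zero]
  have hFnn : ∀ t ∈ Icc (0:ℝ) T, 0 ≤ F t := by
    intro t ht
    rw [hFTC t ht]
    exact intervalIntegral.integral_nonneg ht.1 fun s _ => gNonneg hn₀nn s (F s)
  -- the integral of ρ is F
  have hintρ : ∀ t ∈ Icc (0:ℝ) T, (∫ s in (0:ℝ)..t, gFun p d n₀ s (Fc s)) = F t := by
    intro t ht
    rw [hFTC t ht]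
    apply intervalIntegral.integral_congr
    intro s hs
    rw [uIcc_of_le ht.1] at hs
    exact hρeq s ⟨hs.1, hs.2.trans ht.2⟩
  -- the fixed-point equation, pointwise on Icc 0 T
  have hfix : ∀ t ∈ Icc (0:ℝ) T,
      gFun p d n₀ t (Fc t)
        = ∫ x, n₀ x * Real.exp (t * p x - d x * ∫ s in (0:ℝ)..t, gFun p d n₀ s (Fc s)) := by
    intro t ht
    rw [hintρ t ht, hρeq t ht]
    unfold gFun
    congr 1
    funext x
    rw [max_eq_left (hFnn t ht)]
  refine ⟨fun t => gFun p d n₀ t (Fc t), hρcont.measurable,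
    fun t => gNonneg hn₀nn t (Fc t), ⟨CC, ?_⟩, ?_, ?_⟩
  · intro t ht
    exact gBound hpm hdm hpnn hdnn hn₀nn hn₀L1 hNp (Fc t) (habsT t (Ioo_subset_Icc_self ht))
  · exact (ae_restrict_mem measurableSet_Ioo).mono fun t ht => hfix t (Ioo_subset_Icc_self ht)
  · intro ρ' hm' hnn' hbd' heq'
    obtain ⟨C', hC'⟩ := hbd'
    have aeT : ∀ᵐ s : ℝ ∂(volume : Measure ℝ), s ≠ T := by
      have h0 : (volume : Measure ℝ) {T} = 0 := Real.volume_singleton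
      rw [ae_iff]
      convert h0 using 2
      ext s; simp
    have ae0 : ∀ᵐ s : ℝ ∂(volume : Measure ℝ), s ≠ 0 := by
      have h0 : (volume : Measure ℝ) {0} = 0 := Real.volume_singleton
      rw [ae_iff]
      convert h0 using 2
      ext s; simp
    have hae1 : ∀ᵐ s : ℝ ∂(volume : Measure ℝ), s ∈ Ioo (0:ℝ) T →
        ρ' s = ∫ x, n₀ x * Real.exp (s * p x - d x * ∫ u in (0:ℝ)..s, ρ' u) :=
      (ae_restrict_iff' measurableSet_Ioo).mp heq'
    -- integrability of ρ' on [0,T]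
    have hρ'Icc : IntegrableOn ρ' (Icc 0 T) volume := by
      apply Integrable.mono' (integrable_const (max C' 0)) hm'.aestronglyMeasurable.restrict
      rw [ae_restrict_iff' measurableSet_Icc]
      filter_upwards [aeT, ae0] with s hsT hs0 hs
      have hsIoo : s ∈ Ioo (0:ℝ) T :=
        ⟨lt_of_le_of_ne hs.1 (Ne.symm hs0), lt_of_le_of_ne hs.2 hsT⟩
      rw [Real.norm_eq_abs, abs_of_nonneg (hnn' s)]
      exact (hC' s hsIoo).trans (le_max_left _ _)
    -- F' is the primitive of ρ'
    have hF'nn : ∀ t ∈ Icc (0:ℝ) T, 0 ≤ ∫ s in (0:ℝ)..t, ρ' s := fun t ht =>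
      intervalIntegral.integral_nonneg ht.1 fun s _ => hnn' s
    have hF'cont : ContinuousOn (fun t => ∫ s in (0:ℝ)..t, ρ' s) (Icc 0 T) := by
      have h := intervalIntegral.continuousOn_primitive_interval
        (a := (0:ℝ)) (b := T) (f := ρ') (μ := volume) ?_
      · rwa [uIcc_of_le hT.le] at h
      · rwa [uIcc_of_le hT.le]
    have hρ'g : ∀ᵐ s : ℝ ∂(volume : Measure ℝ), s ∈ Ioo (0:ℝ) T →
        ρ' s = gFun p d n₀ s (∫ u in (0:ℝ)..s, ρ' u) := by
      filter_upwards [hae1] with s h1 hs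
      rw [h1 hs]
      have hmax : max (∫ u in (0:ℝ)..s, ρ' u) 0 = ∫ u in (0:ℝ)..s, ρ' u :=
        max_eq_left (hF'nn s (Ioo_subset_Icc_self hs))
      unfold gFun
      simp only [hmax]
    have hF'eq : ∀ t ∈ Icc (0:ℝ) T,
        (∫ s in (0:ℝ)..t, ρ' s) = ∫ s in (0:ℝ)..t, gFun p d n₀ s (∫ u in (0:ℝ)..s, ρ' u) := by
      intro t ht
      apply intervalIntegral.integral_congr_ae
      filter_upwards [hρ'g, aeT] with s h1 hsT hs
      rw [uIoc_of_le ht.1] at hs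
      exact h1 ⟨hs.1, lt_of_le_of_ne (hs.2.trans ht.2) hsT⟩
    -- continuous extension G' of the primitive
    have hG'cont : Continuous (fun t => ∫ s in (0:ℝ)..(cl t), ρ' s) :=
      hF'cont.comp_continuous hclcont hclmem
    have hQcont0 := hgcont.comp (continuous_id.prodMk hG'cont)
    have hQcont : Continuous (fun s => gFun p d n₀ s (∫ u in (0:ℝ)..(cl s), ρ' u)) := by
      exact hQcont0
    have hQeq : ∀ s ∈ Icc (0:ℝ) T,
        gFun p d n₀ s (∫ u in (0:ℝ)..(cl s), ρ' u)
          = gFun p d n₀ s (∫ u in (0:ℝ)..s, ρ' u) := by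
      intro s hs; rw [hcleq s hs]
    have hKeq : ∀ t ∈ Icc (0:ℝ) T,
        (∫ s in (0:ℝ)..t, gFun p d n₀ s (∫ u in (0:ℝ)..(cl s), ρ' u))
          = ∫ s in (0:ℝ)..t, ρ' s := by
      intro t ht
      rw [hF'eq t ht]
      apply intervalIntegral.integral_congr
      intro s hs
      rw [uIcc_of_le ht.1] at hs
      exact hQeq s ⟨hs.1, hs.2.trans ht.2⟩
    -- derivative of the difference of primitives
    have hder : ∀ x : ℝ, HasDerivAt
        (fun u => (∫ s in (0:ℝ)..u, gFun p d n₀ s (∫ v in (0:ℝ)..(cl s), ρ' v))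
          - ∫ s in (0:ℝ)..u, gFun p d n₀ s (Fc s))
        (gFun p d n₀ x (∫ v in (0:ℝ)..(cl x), ρ' v) - gFun p d n₀ x (Fc x)) x := by
      intro x
      have h1 : HasDerivAt (fun u => ∫ s in (0:ℝ)..u,
            gFun p d n₀ s (∫ v in (0:ℝ)..(cl s), ρ' v))
          (gFun p d n₀ x (∫ v in (0:ℝ)..(cl x), ρ' v)) x :=
        intervalIntegral.integral_hasDerivAt_right (hQcont.intervalIntegrable _ _)
          (hQcont.stronglyMeasurableAtFilter _ _) hQcont.continuousAt
      have h2 : HasDerivAt (fun u => ∫ s in (0:ℝ)..u, gFun p d n₀ s (Fc s))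
          (gFun p d n₀ x (Fc x)) x :=
        intervalIntegral.integral_hasDerivAt_right (hρcont.intervalIntegrable _ _)
          (hρcont.stronglyMeasurableAtFilter _ _) hρcont.continuousAt
      exact h1.sub h2
    have hHcont : Continuous (fun u =>
        (∫ s in (0:ℝ)..u, gFun p d n₀ s (∫ v in (0:ℝ)..(cl s), ρ' v))
          - ∫ s in (0:ℝ)..u, gFun p d n₀ s (Fc s)) :=
      continuous_iff_continuousAt.mpr fun x => (hder x).continuousAt
    -- Grönwall
    have key := norm_le_gronwallBound_of_norm_deriv_right_le (δ := 0) (K := (Lc:ℝ)) (ε := 0)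
      (a := 0) (b := T)
      hHcont.continuousOn
      (fun x _ => (hder x).hasDerivWithinAt)
      (by simp [intervalIntegral.integral_same])
      (by
      intro x hx
      have hxIcc : x ∈ Icc (0:ℝ) T := ⟨hx.1, hx.2.le⟩
      rw [hKeq x hxIcc, hintρ x hxIcc, hQeq x hxIcc, hρeq x hxIcc, add_zero,
        Real.norm_eq_abs, Real.norm_eq_abs]
      have hLcv : (Lc : ℝ) = Nd * CC := rfl
      rw [hLcv]
      have := gLip hpm hdm hpnn hdnn hn₀nn hn₀L1 hNp hNd hxIcc
        (∫ u in (0:ℝ)..x, ρ' u) (F x)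
      calc |gFun p d n₀ x (∫ u in (0:ℝ)..x, ρ' u) - gFun p d n₀ x (F x)|
          ≤ Nd * (I * Real.exp (T * Np)) * |(∫ u in (0:ℝ)..x, ρ' u) - F x| := this
        _ = Nd * CC * |(∫ u in (0:ℝ)..x, ρ' u) - F x| := by rw [hCCdef])
    have hFF' : ∀ t ∈ Icc (0:ℝ) T, (∫ u in (0:ℝ)..t, ρ' u) = F t := by
      intro t ht
      have h := key t ht
      rw [sub_zero, gronwallBound_ε0_δ0, hKeq t ht, hintρ t ht] at h
      have := norm_le_zero_iff.mp h
      linarith [sub_eq_zero.mp this]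
    -- conclusion
    rw [ae_restrict_iff' measurableSet_Ioo]
    filter_upwards [hρ'g] with t h1 ht
    have htIcc := Ioo_subset_Icc_self ht
    rw [h1 ht, hFF' t htIcc, ← hρeq t htIcc]
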